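/- The function ρ(d) = (1/(2J₂(2))) e^{−3|d|/2} J₁(2e^{−|d|/2}) is a probability density on ℝ: it is nonnegative and ∫_ℝ ρ(d) dd = 1. -/

import Mathlib

open Real MeasureTheory

/-- The Bessel function of the first kind of integer order `n`. -/
noncomputable def besselJ (n : ℕ) (x : ℝ) : ℝ :=
  ∑' m : ℕ, (-1 : ℝ) ^ m / (m.factorial * (m + n).factorial) * (x / 2) ^ (2 * m + n)

/-- The stationary density of the difference chain. -/
noncomputable def ρstat (d : ℝ) : ℝ :=
  (1 / (2 * besselJ 2 2)) * exp (-(3 * |d| / 2)) * besselJ 1 (2 * exp (-(|d| / 2)))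

/- ### Auxiliary lemmas -/

lemma summable_bessel (n : ℕ) (x : ℝ) :
    Summable (fun m : ℕ =>
      (-1 : ℝ) ^ m / (m.factorial * (m + n).factorial) * (x / 2) ^ (2 * m + n)) := by
  apply Summable.of_norm
  have hs : Summable (fun m : ℕ => |x / 2| ^ n * (((x / 2) ^ 2) ^ m / m.factorial)) :=
    (Real.summable_pow_div_factorial ((x / 2) ^ 2)).mul_left _
  refine Summable.of_nonneg_of_le (fun m => norm_nonneg _) (fun m => ?_) hs
  have hpos : (0:ℝ) < (m.factorial : ℝ) * (m + n).factorial := by positivity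
  have h1 : ‖(-1 : ℝ) ^ m / (m.factorial * (m + n).factorial) * (x / 2) ^ (2 * m + n)‖
      = |x / 2| ^ (2 * m + n) / ((m.factorial : ℝ) * (m + n).factorial) := by
    simp only [norm_mul, norm_div, norm_pow, norm_neg, norm_one, one_pow, Real.norm_eq_abs,
      Nat.abs_cast]
    rw [abs_div]
    ring
  rw [h1]
  have h2 : |x / 2| ^ (2 * m + n) = |x / 2| ^ n * ((x / 2) ^ 2) ^ m := by
    rw [← sq_abs, ← pow_mul, ← pow_add]
    ring_nf
  rw [h2, mul_div_assoc]
  apply mul_le_mul_of_nonneg_left _ (by positivity)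
  apply div_le_div₀ (by positivity) le_rfl (by positivity)
  have hfn : (1:ℝ) ≤ ((m + n).factorial : ℝ) := by exact_mod_cast (m + n).factorial_pos
  have hfm : (0:ℝ) < (m.factorial : ℝ) := by exact_mod_cast m.factorial_pos
  nlinarith

lemma tsum_eq_pair {f : ℕ → ℝ} (hf : Summable f) :
    ∑' m, f m = ∑' k, (f (2 * k) + f (2 * k + 1)) := by
  have hinj : Function.Injective (fun k : ℕ => 2 * k) := fun a b h => by
    simp only at h; omega
  have hinj' : Function.Injective (fun k : ℕ => 2 * k + 1) := fun a b h => by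
    simp only at h; omega
  have he : Summable (fun k => f (2 * k)) := hf.comp_injective hinj
  have ho : Summable (fun k => f (2 * k + 1)) := hf.comp_injective hinj'
  rw [← tsum_even_add_odd he ho, ← Summable.tsum_add he ho]

lemma besselJ_one_nonneg {x : ℝ} (h0 : 0 ≤ x) (h2 : x ≤ 2) : 0 ≤ besselJ 1 x := by
  have ht0 : (0:ℝ) ≤ x / 2 := by linarith
  have ht1 : x / 2 ≤ 1 := by linarith
  rw [besselJ, tsum_eq_pair (summable_bessel 1 x)]
  apply tsum_nonneg
  intro k
  have e1 : (-1 : ℝ) ^ (2 * k) = 1 := by simp [pow_mul]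
  have e2 : (-1 : ℝ) ^ (2 * k + 1) = -1 := by rw [pow_succ, e1]; ring
  rw [e1, e2]
  have hA : (0:ℝ) < ((2 * k).factorial : ℝ) * ((2 * k + 1).factorial : ℝ) := by positivity
  have hAB : ((2 * k).factorial : ℝ) * ((2 * k + 1).factorial : ℝ)
      ≤ ((2 * k + 1).factorial : ℝ) * ((2 * k + 1 + 1).factorial : ℝ) := by
    exact_mod_cast Nat.mul_le_mul (Nat.factorial_le (by omega)) (Nat.factorial_le (by omega))
  have key : (x / 2) ^ (2 * (2 * k + 1) + 1) /
        (((2 * k + 1).factorial : ℝ) * ((2 * k + 1 + 1).factorial : ℝ))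
      ≤ (x / 2) ^ (2 * (2 * k) + 1) /
        (((2 * k).factorial : ℝ) * ((2 * k + 1).factorial : ℝ)) :=
    div_le_div₀ (by positivity) (pow_le_pow_of_le_one ht0 ht1 (by omega)) hA hAB
  have h3 : (1 : ℝ) / (((2 * k).factorial : ℝ) * ((2 * k + 1).factorial : ℝ))
        * (x / 2) ^ (2 * (2 * k) + 1)
      = (x / 2) ^ (2 * (2 * k) + 1) /
        (((2 * k).factorial : ℝ) * ((2 * k + 1).factorial : ℝ)) := by ring
  have h4 : (-1 : ℝ) / (((2 * k + 1).factorial : ℝ) * ((2 * k + 1 + 1).factorial : ℝ))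
        * (x / 2) ^ (2 * (2 * k + 1) + 1)
      = -((x / 2) ^ (2 * (2 * k + 1) + 1) /
        (((2 * k + 1).factorial : ℝ) * ((2 * k + 1 + 1).factorial : ℝ))) := by ring
  rw [h3, h4]
  linarith

lemma besselJ_two_two_eq :
    besselJ 2 2 = ∑' m : ℕ, (-1 : ℝ) ^ m / (m.factorial * (m + 2).factorial) := by
  rw [besselJ]
  apply tsum_congr
  intro m
  norm_num

lemma summable_J22 :
    Summable (fun m : ℕ => (-1 : ℝ) ^ m / (m.factorial * (m + 2).factorial)) := by
  have := summable_bessel 2 2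
  refine this.congr fun m => ?_
  norm_num

lemma besselJ_two_two_pos : 0 < besselJ 2 2 := by
  rw [besselJ_two_two_eq, tsum_eq_pair summable_J22]
  have hinj : Function.Injective (fun k : ℕ => 2 * k) := fun a b h => by
    simp only at h; omega
  have hinj' : Function.Injective (fun k : ℕ => 2 * k + 1) := fun a b h => by
    simp only at h; omega
  have he := summable_J22.comp_injective hinj
  have ho := summable_J22.comp_injective hinj'
  refine Summable.tsum_pos (he.add ho) (fun k => ?_) 0 ?_
  · have e1 : (-1 : ℝ) ^ (2 * k) = 1 := by simp [pow_mul]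
    have e2 : (-1 : ℝ) ^ (2 * k + 1) = -1 := by rw [pow_succ, e1]; ring
    simp only [Function.comp, e1, e2]
    have hA : (0:ℝ) < ((2 * k).factorial : ℝ) * ((2 * k + 2).factorial : ℝ) := by positivity
    have hAB : ((2 * k).factorial : ℝ) * ((2 * k + 2).factorial : ℝ)
        ≤ ((2 * k + 1).factorial : ℝ) * ((2 * k + 1 + 2).factorial : ℝ) := by
      exact_mod_cast Nat.mul_le_mul (Nat.factorial_le (by omega)) (Nat.factorial_le (by omega))
    have key : (1:ℝ) / (((2 * k + 1).factorial : ℝ) * ((2 * k + 1 + 2).factorial : ℝ))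
        ≤ (1:ℝ) / (((2 * k).factorial : ℝ) * ((2 * k + 2).factorial : ℝ)) :=
      one_div_le_one_div_of_le hA hAB
    have h3 : (1 : ℝ) / (((2 * k).factorial : ℝ) * ((2 * k + 2).factorial : ℝ))
        = (1:ℝ) / (((2 * k).factorial : ℝ) * ((2 * k + 2).factorial : ℝ)) := rfl
    have : ((-1:ℝ)) / (((2 * k + 1).factorial : ℝ) * ((2 * k + 1 + 2).factorial : ℝ))
        = -((1:ℝ) / (((2 * k + 1).factorial : ℝ) * ((2 * k + 1 + 2).factorial : ℝ))) := by ring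
    rw [this]
    linarith
  · norm_num [Nat.factorial]

lemma integrable_comp_abs' {f : ℝ → ℝ} (hf : IntegrableOn f (Set.Ioi 0)) :
    Integrable (fun x : ℝ => f |x|) := by
  have hf' : IntegrableOn (fun x => f |x|) (Set.Ioi 0) := by
    refine hf.congr_fun (fun x hx => ?_) measurableSet_Ioi
    rw [abs_of_pos hx]
  have int_Iic : IntegrableOn (fun x => f |x|) (Set.Iic 0) := by
    rw [← Measure.map_neg_eq_self (volume : Measure ℝ)]
    have m : MeasurableEmbedding fun x : ℝ => -x := (Homeomorph.neg ℝ).measurableEmbedding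
    rw [m.integrableOn_map_iff]
    simp_rw [Function.comp_def, abs_neg, Set.neg_preimage, Set.neg_Iic, neg_zero]
    exact Iff.mpr integrableOn_Ici_iff_integrableOn_Ioi hf'
  have h := int_Iic.union hf'
  rwa [Set.Iic_union_Ioi, integrableOn_univ] at h

lemma integrable_exp_neg_mul_abs {b : ℝ} (hb : 0 < b) :
    Integrable (fun d : ℝ => exp (-(b * |d|))) := by
  have := integrable_comp_abs' (f := fun x => exp (-(b * x)))
    ((exp_neg_integrableOn_Ioi 0 hb).congr_fun (fun x _ => by ring_nf) measurableSet_Ioi)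
  exact this

lemma integral_exp_neg_mul_abs {b : ℝ} (hb : 0 < b) :
    ∫ d : ℝ, exp (-(b * |d|)) = 2 / b := by
  rw [show (fun d : ℝ => exp (-(b * |d|))) = (fun d : ℝ => (fun x => exp (-(b * x))) |d|) from rfl,
    integral_comp_abs (f := fun x => exp (-(b * x)))]
  have h := integral_comp_mul_left_Ioi (fun y : ℝ => exp (-y)) 0 hb
  simp only [mul_zero, smul_eq_mul] at h
  rw [show (fun x : ℝ => exp (-(b * x))) = (fun x : ℝ => (fun y : ℝ => exp (-y)) (b * x)) from rfl]
  rw [h, integral_exp_neg_Ioi_zero]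
  field_simp

theorem ρstat_probability_density :
    (∀ d : ℝ, 0 ≤ ρstat d) ∧ (∫ d : ℝ, ρstat d = 1) := by
  have hJ := besselJ_two_two_pos
  constructor
  · intro d
    have h1 : (0:ℝ) ≤ 2 * exp (-(|d| / 2)) := by positivity
    have h2 : 2 * exp (-(|d| / 2)) ≤ 2 := by
      have : exp (-(|d| / 2)) ≤ 1 := by
        rw [exp_le_one_iff]
        have := abs_nonneg d
        linarith
      linarith
    have := besselJ_one_nonneg h1 h2
    have hK : (0:ℝ) ≤ 1 / (2 * besselJ 2 2) := by positivity
    rw [ρstat]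
    have := exp_nonneg (-(3 * |d| / 2))
    positivity
  · -- the integral
    set F : ℕ → ℝ → ℝ := fun m d =>
      (-1 : ℝ) ^ m / (m.factorial * (m + 1).factorial) * exp (-(((m : ℝ) + 2) * |d|)) with hF
    have hptw : ∀ d : ℝ, exp (-(3 * |d| / 2)) * besselJ 1 (2 * exp (-(|d| / 2)))
        = ∑' m, F m d := by
      intro d
      rw [besselJ, ← tsum_mul_left]
      apply tsum_congr
      intro m
      have h22 : 2 * exp (-(|d| / 2)) / 2 = exp (-(|d| / 2)) := by ring
      rw [h22, ← exp_nat_mul, hF]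
      have : exp (-(3 * |d| / 2)) * ((-1:ℝ) ^ m / (m.factorial * (m + 1).factorial)
            * exp ((2 * m + 1 : ℕ) * -(|d| / 2)))
          = (-1:ℝ) ^ m / (m.factorial * (m + 1).factorial)
            * (exp (-(3 * |d| / 2)) * exp ((2 * m + 1 : ℕ) * -(|d| / 2))) := by ring
      rw [this, ← exp_add]
      congr 1
      push_cast
      ring
    have hint : ∀ m : ℕ, Integrable (F m) := by
      intro m
      have hb : (0:ℝ) < (m : ℝ) + 2 := by positivity
      exact (integrable_exp_neg_mul_abs hb).const_mul _
    have hval : ∀ m : ℕ, ∫ d : ℝ, F m d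
        = (-1 : ℝ) ^ m / (m.factorial * (m + 1).factorial) * (2 / ((m : ℝ) + 2)) := by
      intro m
      rw [hF]
      simp only
      rw [integral_const_mul, integral_exp_neg_mul_abs (by positivity : (0:ℝ) < (m:ℝ) + 2)]
    have hnorm : ∀ m : ℕ, ∫ d : ℝ, ‖F m d‖
        = (1 : ℝ) / (m.factorial * (m + 1).factorial) * (2 / ((m : ℝ) + 2)) := by
      intro m
      have hc : (0:ℝ) < (m.factorial : ℝ) * ((m + 1).factorial : ℝ) := by positivity
      have : ∀ d : ℝ, ‖F m d‖
          = (1 : ℝ) / (m.factorial * (m + 1).factorial) * exp (-(((m : ℝ) + 2) * |d|)) := by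
        intro d
        rw [hF]
        simp only [norm_mul, norm_div, norm_pow, norm_neg, norm_one, one_pow, Real.norm_eq_abs,
          Nat.abs_cast, abs_exp]
      simp_rw [this]
      rw [integral_const_mul, integral_exp_neg_mul_abs (by positivity : (0:ℝ) < (m:ℝ) + 2)]
    have hsumnorm : Summable (fun m : ℕ => ∫ d : ℝ, ‖F m d‖) := by
      have hs : Summable (fun m : ℕ => 2 * ((1:ℝ) ^ m / m.factorial)) :=
        (Real.summable_pow_div_factorial 1).mul_left 2
      refine Summable.of_nonneg_of_le (fun m => ?_) (fun m => ?_) hs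
      · rw [hnorm m]; positivity
      · rw [hnorm m]
        have h1 : (1:ℝ) ≤ ((m + 1).factorial : ℝ) := by exact_mod_cast (m + 1).factorial_pos
        have h2 : (0:ℝ) < (m.factorial : ℝ) := by exact_mod_cast m.factorial_pos
        have h3 : (2:ℝ) / ((m : ℝ) + 2) ≤ 1 := by
          rw [div_le_one (by positivity)]
          have : (0:ℝ) ≤ (m:ℝ) := Nat.cast_nonneg m
          linarith
        have h4 : (1:ℝ) / ((m.factorial : ℝ) * ((m + 1).factorial : ℝ))
            ≤ 1 / (m.factorial : ℝ) := by
          apply one_div_le_one_div_of_le h2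
          nlinarith
        calc (1 : ℝ) / (m.factorial * (m + 1).factorial) * (2 / ((m : ℝ) + 2))
            ≤ 1 / (m.factorial : ℝ) * 1 := by
              apply mul_le_mul h4 h3 (by positivity) (by positivity)
          _ ≤ 2 * ((1:ℝ) ^ m / m.factorial) := by
              rw [one_pow, mul_one]
              have := one_div_pos.mpr h2
              linarith
    have hswap : ∑' m : ℕ, (∫ d : ℝ, F m d) = ∫ d : ℝ, ∑' m : ℕ, F m d :=
      integral_tsum_of_summable_integral_norm hint hsumnorm
    have hmain : ∫ d : ℝ, exp (-(3 * |d| / 2)) * besselJ 1 (2 * exp (-(|d| / 2)))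
        = 2 * besselJ 2 2 := by
      rw [show (fun d : ℝ => exp (-(3 * |d| / 2)) * besselJ 1 (2 * exp (-(|d| / 2))))
          = fun d : ℝ => ∑' m : ℕ, F m d from funext hptw]
      rw [← hswap]
      have : ∀ m : ℕ, ∫ d : ℝ, F m d
          = 2 * ((-1 : ℝ) ^ m / (m.factorial * (m + 2).factorial)) := by
        intro m
        rw [hval m]
        have hfact : ((m + 2).factorial : ℝ) = ((m : ℝ) + 2) * ((m + 1).factorial : ℝ) := by
          rw [show m + 2 = (m + 1) + 1 from rfl, Nat.factorial_succ]
          push_cast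
          ring
        rw [hfact]
        have h1 : (0:ℝ) < (m.factorial : ℝ) := by exact_mod_cast m.factorial_pos
        have h2 : (0:ℝ) < ((m + 1).factorial : ℝ) := by exact_mod_cast (m + 1).factorial_pos
        have h3 : (0:ℝ) < (m : ℝ) + 2 := by positivity
        field_simp
      simp_rw [this]
      rw [tsum_mul_left, besselJ_two_two_eq]
    have : ∫ d : ℝ, ρstat d
        = (1 / (2 * besselJ 2 2)) *
          ∫ d : ℝ, exp (-(3 * |d| / 2)) * besselJ 1 (2 * exp (-(|d| / 2))) := by
      rw [← integral_const_mul]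
      apply integral_congr_ae
      filter_upwards with d
      rw [ρstat]
      ring
    rw [this, hmain]
    field_simp
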